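/- Let n₀, m₁, ..., m₇ be a fundamental system in genus 3 with n₀ even and all mᵢ odd. Then the 35 sums mᵢ + mⱼ + m_k (1 ≤ i < j < k ≤ 7) are pairwise distinct even characteristics, all different from n₀, and together with n₀ they exhaust all 36 even characteristics of F_2^6. -/

import Mathlib

open Finset

/-- The space of theta characteristics in genus `g`: pairs `(m', m'')` of vectors in `F_2^g`. -/
abbrev V (g : ℕ) := (Fin g → ZMod 2) × (Fin g → ZMod 2)

/-- The `F_2`-inner product of two vectors. -/
def dotp {g : ℕ} (a b : Fin g → ZMod 2) : ZMod 2 := ∑ i, a i * b i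

/-- The parity invariant `m'·m'' ∈ F_2`; `m` is even iff `par m = 0`. -/
def par {g : ℕ} (m : V g) : ZMod 2 := dotp m.1 m.2

/-- The sign `e(m) = (-1)^{m'·m''}`. -/
def e {g : ℕ} (m : V g) : ℤ := (-1) ^ (par m).val

/-- The syzygy invariant `e(m₁,m₂,m₃) = e(m₁)e(m₂)e(m₃)e(m₁+m₂+m₃)`. -/
def e3 {g : ℕ} (m₁ m₂ m₃ : V g) : ℤ := e m₁ * e m₂ * e m₃ * e (m₁ + m₂ + m₃)

/-- The standard symplectic form `⟨m,n⟩ = m'·n'' + m''·n'` on `F_2^{2g}`. -/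
def sp {g : ℕ} (m n : V g) : ZMod 2 := dotp m.1 n.2 + dotp m.2 n.1

lemma zadd (a : ZMod 2) : a + a = 0 := by revert a; decide

lemma dotp_comm {g : ℕ} (a b : Fin g → ZMod 2) : dotp a b = dotp b a := by
  simp [dotp, mul_comm]

lemma dotp_add_right {g : ℕ} (a b c : Fin g → ZMod 2) :
    dotp a (b + c) = dotp a b + dotp a c := by
  simp [dotp, mul_add, Finset.sum_add_distrib]

lemma sp_comm {g : ℕ} (x y : V g) : sp x y = sp y x := by
  unfold sp; rw [dotp_comm x.1 y.2, dotp_comm x.2 y.1, add_comm]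

lemma sp_add_right {g : ℕ} (x y z : V g) : sp x (y + z) = sp x y + sp x z := by
  unfold sp
  rw [Prod.fst_add, Prod.snd_add, dotp_add_right, dotp_add_right]
  ring

lemma sp_add_left {g : ℕ} (x y z : V g) : sp (x + y) z = sp x z + sp y z := by
  rw [sp_comm, sp_add_right, sp_comm z x, sp_comm z y]

lemma sp_self {g : ℕ} (x : V g) : sp x x = 0 := by
  unfold sp; rw [dotp_comm x.2 x.1]; exact zadd _

lemma sp_zero_right {g : ℕ} (x : V g) : sp x 0 = 0 := by
  simp [sp, dotp]

lemma par_add {g : ℕ} (x y : V g) : par (x + y) = par x + par y + sp x y := by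
  simp only [par, sp, dotp, Prod.fst_add, Prod.snd_add, Pi.add_apply, add_mul, mul_add,
    Finset.sum_add_distrib]
  have h : ∑ i, x.2 i * y.1 i = ∑ i, y.1 i * x.2 i :=
    Finset.sum_congr rfl fun i _ => mul_comm _ _
  rw [h]
  ring

lemma neg_pow_lemma (a b c s : ZMod 2) :
    (-1 : ℤ) ^ a.val * (-1) ^ b.val * (-1) ^ c.val * (-1) ^ (a + b + c + s).val
      = (-1) ^ s.val := by
  revert a b c s; decide

lemma e3_eq {g : ℕ} (x y z : V g) :
    e3 x y z = (-1 : ℤ) ^ ((sp x y + sp x z + sp y z).val) := by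
  have h : par (x + y + z) = par x + par y + par z + (sp x y + sp x z + sp y z) := by
    rw [par_add, par_add, sp_add_left]; ring
  unfold e3 e
  rw [h]
  exact neg_pow_lemma _ _ _ _

lemma e3_neg_one {g : ℕ} (x y z : V g) (h : e3 x y z = -1) :
    sp x y + sp x z + sp y z = 1 := by
  rw [e3_eq] at h
  revert h
  generalize sp x y + sp x z + sp y z = v
  revert v; decide

lemma sp_sum {g : ℕ} {ι : Type*} (x : V g) (d : Finset ι) (f : ι → V g) :
    sp x (∑ i ∈ d, f i) = ∑ i ∈ d, sp x (f i) := by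
  classical
  induction d using Finset.induction_on with
  | empty => simp [sp_zero_right]
  | insert _ _ h ih => rw [Finset.sum_insert h, Finset.sum_insert h, sp_add_right, ih]

theorem fundamental_system_even_characteristics (n₀ : V 3) (m : Fin 7 → V 3)
    (hn : par n₀ = 0) (hm : ∀ i, par (m i) = 1)
    (hinj : Function.Injective m) (hne : ∀ i, n₀ ≠ m i)
    (haz₁ : ∀ i j k : Fin 7, i ≠ j → i ≠ k → j ≠ k → e3 (m i) (m j) (m k) = -1)
    (haz₂ : ∀ i j : Fin 7, i ≠ j → e3 n₀ (m i) (m j) = -1) :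
    (∀ i j k i' j' k' : Fin 7, i ≠ j → i ≠ k → j ≠ k → i' ≠ j' → i' ≠ k' → j' ≠ k' →
      m i + m j + m k = m i' + m j' + m k' →
      ({i, j, k} : Finset (Fin 7)) = {i', j', k'}) ∧
    (∀ i j k : Fin 7, i ≠ j → i ≠ k → j ≠ k →
      par (m i + m j + m k) = 0 ∧ m i + m j + m k ≠ n₀) ∧
    (insert n₀
        ((univ.filter (fun t : Fin 7 × Fin 7 × Fin 7 =>
            t.1 ≠ t.2.1 ∧ t.1 ≠ t.2.2 ∧ t.2.1 ≠ t.2.2)).image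
          (fun t => m t.1 + m t.2.1 + m t.2.2)) =
      univ.filter (fun x : V 3 => par x = 0)) ∧
    (univ.filter (fun x : V 3 => par x = 0)).card = 36 := by
  classical
  -- basic consequence of azygeticity with n₀
  have spm : ∀ i j : Fin 7, i ≠ j →
      sp (m i) (m j) = 1 + sp n₀ (m i) + sp n₀ (m j) := by
    intro i j hij
    have h := e3_neg_one _ _ _ (haz₂ i j hij)
    revert h
    generalize sp n₀ (m i) = p
    generalize sp n₀ (m j) = q
    generalize sp (m i) (m j) = r
    revert p q r; decide
  have hv : ∀ v : V 3, v + v = 0 := by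
    intro v
    refine Prod.ext ?_ ?_ <;> funext i <;> exact zadd _
  -- key lemma: no nonempty even subfamily of the m's sums to zero
  have key : ∀ d : Finset (Fin 7), d.Nonempty → Even d.card →
      (∑ i ∈ d, m i) = 0 → False := by
    intro d hdne hev hs
    obtain ⟨a, ha⟩ := hdne
    have hb0 : ∑ i ∈ d, sp n₀ (m i) = 0 := by
      rw [← sp_sum, hs, sp_zero_right]
    have ha0 : ∑ i ∈ d, sp (m a) (m i) = 0 := by
      rw [← sp_sum, hs, sp_zero_right]
    rw [← Finset.add_sum_erase d _ ha, sp_self, zero_add] at ha0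
    rw [← Finset.add_sum_erase d _ ha] at hb0
    have hcong : ∑ i ∈ d.erase a, sp (m a) (m i)
        = ∑ i ∈ d.erase a, (1 + sp n₀ (m a) + sp n₀ (m i)) := by
      refine Finset.sum_congr rfl fun i hi => spm a i ?_
      exact (Finset.ne_of_mem_erase hi).symm
    rw [hcong, Finset.sum_add_distrib, Finset.sum_const] at ha0
    have hodd : (d.erase a).card % 2 = 1 := by
      rw [Finset.card_erase_of_mem ha]
      obtain ⟨c, hc⟩ := hev
      have h1 : 1 ≤ d.card := Finset.card_pos.mpr ⟨a, ha⟩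
      omega
    have hsmul : ∀ x : ZMod 2, (d.erase a).card • x = x := by
      intro x
      have hcast : (((d.erase a).card : ℕ) : ZMod 2) = 1 := by
        have h5 := (ZMod.natCast_mod (d.erase a).card 2).symm
        rw [hodd] at h5
        simpa using h5
      rw [nsmul_eq_mul, hcast, one_mul]
    rw [hsmul] at ha0
    revert ha0 hb0
    generalize sp n₀ (m a) = p
    generalize (∑ i ∈ d.erase a, sp n₀ (m i)) = q
    revert p q; decide
  -- sums over explicit three-element sets
  have hsum3 : ∀ i j k : Fin 7, i ≠ j → i ≠ k → j ≠ k →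
      (∑ x ∈ ({i, j, k} : Finset (Fin 7)), m x) = m i + m j + m k := by
    intro i j k hij hik hjk
    rw [Finset.sum_insert (by simp [hij, hik]), Finset.sum_pair hjk, add_assoc]
  have hcard3 : ∀ i j k : Fin 7, i ≠ j → i ≠ k → j ≠ k →
      ({i, j, k} : Finset (Fin 7)).card = 3 := by
    intro i j k hij hik hjk
    rw [Finset.card_insert_of_notMem (by simp [hij, hik]),
      Finset.card_insert_of_notMem (by simp [hjk]), Finset.card_singleton]
  -- injectivity of the triple-sum on 3-element sets
  have hFinj : ∀ s t : Finset (Fin 7), s.card = 3 → t.card = 3 →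
      (∑ i ∈ s, m i) = (∑ i ∈ t, m i) → s = t := by
    intro s t hs3 ht3 hF
    by_contra hst
    have hd : (symmDiff s t).Nonempty := by
      rw [Finset.nonempty_iff_ne_empty]
      intro h
      exact hst (symmDiff_eq_bot.mp (by rw [Finset.bot_eq_empty]; exact h))
    have e1 : (s \ t).card = 3 - (s ∩ t).card := by
      rw [← Finset.sdiff_inter_self_left s t, Finset.card_sdiff_of_subset Finset.inter_subset_left, hs3]
    have e2 : (t \ s).card = 3 - (s ∩ t).card := by
      rw [← Finset.sdiff_inter_self_left t s, Finset.card_sdiff_of_subset Finset.inter_subset_left, ht3,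
        Finset.inter_comm]
    have hcard_even : Even (symmDiff s t).card := by
      rw [symmDiff_def, Finset.sup_eq_union, Finset.card_union_of_disjoint disjoint_sdiff_sdiff]
      exact ⟨3 - (s ∩ t).card, by rw [e1, e2]⟩
    have h1 : ∑ i ∈ s \ t, m i + ∑ i ∈ s ∩ t, m i = ∑ i ∈ s, m i := by
      rw [← Finset.sdiff_inter_self_left s t]
      exact Finset.sum_sdiff Finset.inter_subset_left
    have h2 : ∑ i ∈ t \ s, m i + ∑ i ∈ s ∩ t, m i = ∑ i ∈ t, m i := by
      rw [← Finset.sdiff_inter_self_left t s, Finset.inter_comm s t]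
      exact Finset.sum_sdiff Finset.inter_subset_left
    have hzero : ∑ i ∈ symmDiff s t, m i = 0 := by
      rw [symmDiff_def, Finset.sup_eq_union, Finset.sum_union disjoint_sdiff_sdiff]
      have h3 : (∑ i ∈ s \ t, m i + ∑ i ∈ s ∩ t, m i)
          + (∑ i ∈ t \ s, m i + ∑ i ∈ s ∩ t, m i) = 0 := by
        rw [h1, h2, ← hF]; exact hv _
      have h4 : (∑ i ∈ s \ t, m i + ∑ i ∈ s ∩ t, m i)
          + (∑ i ∈ t \ s, m i + ∑ i ∈ s ∩ t, m i)
          = (∑ i ∈ s \ t, m i + ∑ i ∈ t \ s, m i)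
            + (∑ i ∈ s ∩ t, m i + ∑ i ∈ s ∩ t, m i) := by abel
      rw [h4, hv, add_zero] at h3
      exact h3
    exact key _ hd hcard_even hzero
  -- part (B): evenness of triple sums
  have hpar : ∀ i j k : Fin 7, i ≠ j → i ≠ k → j ≠ k → par (m i + m j + m k) = 0 := by
    intro i j k hij hik hjk
    have h3 : par (m i + m j + m k) = par (m i) + par (m j) + par (m k)
        + (sp (m i) (m j) + sp (m i) (m k) + sp (m j) (m k)) := by
      rw [par_add, par_add, sp_add_left]; ring
    rw [h3, hm i, hm j, hm k, spm i j hij, spm i k hik, spm j k hjk]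
    generalize sp n₀ (m i) = p
    generalize sp n₀ (m j) = q
    generalize sp n₀ (m k) = r
    revert p q r; decide
  -- part (C): triple sums differ from n₀
  have hne3 : ∀ i j k : Fin 7, i ≠ j → i ≠ k → j ≠ k → m i + m j + m k ≠ n₀ := by
    intro i j k hij hik hjk heq
    have hex : ∀ i j k : Fin 7, ∃ l : Fin 7, l ≠ i ∧ l ≠ j ∧ l ≠ k := by decide
    obtain ⟨l, hli, hlj, hlk⟩ := hex i j k
    have hA : sp (m l) (m i) + sp (m l) (m j) + sp (m l) (m k) = sp n₀ (m l) := by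
      rw [← sp_add_right, ← sp_add_right, heq, sp_comm]
    have hB : sp n₀ (m i) + sp n₀ (m j) + sp n₀ (m k) = 0 := by
      rw [← sp_add_right, ← sp_add_right, heq, sp_self]
    rw [spm l i hli, spm l j hlj, spm l k hlk] at hA
    revert hA hB
    generalize sp n₀ (m l) = s
    generalize sp n₀ (m i) = p
    generalize sp n₀ (m j) = q
    generalize sp n₀ (m k) = r
    revert s p q r; decide
  have hv36 : (univ.filter (fun x : V 3 => par x = 0)).card = 36 := by decide
  refine ⟨?_, fun i j k hij hik hjk => ⟨hpar i j k hij hik hjk, hne3 i j k hij hik hjk⟩,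
    ?_, hv36⟩
  · intro i j k i' j' k' hij hik hjk hij' hik' hjk' hsum
    refine hFinj _ _ (hcard3 i j k hij hik hjk) (hcard3 i' j' k' hij' hik' hjk') ?_
    rw [hsum3 i j k hij hik hjk, hsum3 i' j' k' hij' hik' hjk']
    exact hsum
  · -- exhaustion
    set S := ((univ.filter (fun t : Fin 7 × Fin 7 × Fin 7 =>
        t.1 ≠ t.2.1 ∧ t.1 ≠ t.2.2 ∧ t.2.1 ≠ t.2.2)).image
        (fun t => m t.1 + m t.2.1 + m t.2.2)) with hSdef
    have hSimg : S = (Finset.univ.powersetCard 3).image (fun s => ∑ i ∈ s, m i) := by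
      ext x
      rw [hSdef]
      simp only [Finset.mem_image, Finset.mem_filter, Finset.mem_univ, true_and,
        Finset.mem_powersetCard_univ]
      constructor
      · rintro ⟨⟨i, j, k⟩, ⟨hij, hik, hjk⟩, rfl⟩
        exact ⟨{i, j, k}, hcard3 i j k hij hik hjk, hsum3 i j k hij hik hjk⟩
      · rintro ⟨s, hs, rfl⟩
        obtain ⟨a, b, c, hab, hac, hbc, rfl⟩ := Finset.card_eq_three.mp hs
        exact ⟨(a, b, c), ⟨hab, hac, hbc⟩, (hsum3 a b c hab hac hbc).symm⟩
    have hScard : S.card = 35 := by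
      rw [hSimg, Finset.card_image_of_injOn, Finset.card_powersetCard, Finset.card_univ,
        Fintype.card_fin]
      · rfl
      · intro s hs t ht h
        exact hFinj s t (Finset.mem_powersetCard_univ.mp hs)
          (Finset.mem_powersetCard_univ.mp ht) h
    have hn₀S : n₀ ∉ S := by
      intro hmem
      rw [hSdef] at hmem
      obtain ⟨t, ht, hteq⟩ := Finset.mem_image.mp hmem
      rw [Finset.mem_filter] at ht
      exact hne3 _ _ _ ht.2.1 ht.2.2.1 ht.2.2.2 hteq
    have hsub : insert n₀ S ⊆ univ.filter (fun x : V 3 => par x = 0) := by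
      intro x hx
      rw [Finset.mem_insert] at hx
      rw [Finset.mem_filter]
      refine ⟨Finset.mem_univ _, ?_⟩
      rcases hx with rfl | hx
      · exact hn
      · rw [hSdef] at hx
        obtain ⟨t, ht, rfl⟩ := Finset.mem_image.mp hx
        rw [Finset.mem_filter] at ht
        exact hpar _ _ _ ht.2.1 ht.2.2.1 ht.2.2.2
    apply Finset.eq_of_subset_of_card_le hsub
    rw [hv36, Finset.card_insert_of_notMem hn₀S, hScard]
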